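/- For every α ∈ (0,1) there is no γ > 0 such that for every integer ℓ ≥ 1, γ²(1−γ)^{ℓ−1} = (α^ℓ(1−α)/(1+α²))·( 1/ℓ + Σ_{ω=2}^∞ α^{ω−1}(1−ω)^{ℓ−1}(1+(ω−1)α)² ). -/

import Mathlib

private lemma aux_summand (α : ℝ) (hα0 : 0 < α) (hα1 : α < 1) (m : ℕ) :
    Summable (fun k : ℕ => ((k : ℝ) + 1) ^ m * α ^ (k + 1)) := by
  have h : Summable (fun n : ℕ => (n : ℝ) ^ m * α ^ n) :=
    summable_pow_mul_geometric_of_norm_lt_one m (by rw [Real.norm_eq_abs, abs_of_pos hα0]; exact hα1)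
  have h2 := (summable_nat_add_iff 1).2 h
  refine h2.congr fun n => ?_
  push_cast
  ring

private lemma aux_g_summable (α : ℝ) (hα0 : 0 < α) (hα1 : α < 1) (m : ℕ) :
    Summable (fun k : ℕ => α ^ (k + 1) * ((k : ℝ) + 1) ^ m * (1 + ((k : ℝ) + 1) * α) ^ 2) := by
  have hb := (aux_summand α hα0 hα1 (m + 2)).mul_left 4
  refine Summable.of_nonneg_of_le (fun k => by positivity) (fun k => ?_) hb
  have hk0 : (0 : ℝ) ≤ (k : ℝ) := Nat.cast_nonneg k
  have hx1 : (1 : ℝ) ≤ (k : ℝ) + 1 := by linarith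
  have hxnn : (0 : ℝ) ≤ 1 + ((k : ℝ) + 1) * α := by nlinarith
  have h1 : 1 + ((k : ℝ) + 1) * α ≤ 2 * ((k : ℝ) + 1) := by nlinarith
  have h2 : (1 + ((k : ℝ) + 1) * α) ^ 2 ≤ 4 * ((k : ℝ) + 1) ^ 2 := by nlinarith
  have h3 : ((k : ℝ) + 1) ^ (m + 2) = ((k : ℝ) + 1) ^ m * ((k : ℝ) + 1) ^ 2 := by
    rw [pow_add]
  calc α ^ (k + 1) * ((k : ℝ) + 1) ^ m * (1 + ((k : ℝ) + 1) * α) ^ 2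
      ≤ α ^ (k + 1) * ((k : ℝ) + 1) ^ m * (4 * ((k : ℝ) + 1) ^ 2) := by
        apply mul_le_mul_of_nonneg_left h2 (by positivity)
    _ = 4 * (((k : ℝ) + 1) ^ (m + 2) * α ^ (k + 1)) := by rw [h3]; ring

private lemma aux_main (α γ C M S : ℝ) (ℓ : ℕ)
    (hα0 : 0 < α) (hα1 : α < 1) (hCpos : 0 < C) (hM1 : 1 ≤ M) (hℓ1 : 1 ≤ ℓ)
    (hPlb : -(M ^ (ℓ - 1)) ≤ (1 - γ) ^ (ℓ - 1))
    (hS : α ^ ℓ * (ℓ : ℝ) ^ (ℓ - 1) ≤ S)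
    (heq : γ ^ 2 * (1 - γ) ^ (ℓ - 1) = α ^ ℓ * C * (1 / (ℓ : ℝ)) - α ^ ℓ * C * S)
    (h2M : 2 * M ≤ α ^ 2 * (ℓ : ℝ))
    (hpow2 : (ℓ : ℝ) ≤ 2 ^ (ℓ - 1))
    (hbig : 2 * (γ ^ 2 + C + 1) < C * α ^ 2 * (ℓ : ℝ)) : False := by
  have hα2 : (0 : ℝ) < α ^ 2 := by positivity
  have hA0 : (0 : ℝ) < α ^ ℓ := pow_pos hα0 ℓ
  have hA1 : α ^ ℓ ≤ 1 := pow_le_one₀ hα0.le hα1.le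
  have hLge1 : (1 : ℝ) ≤ (ℓ : ℝ) := by exact_mod_cast hℓ1
  have hinv1 : 1 / (ℓ : ℝ) ≤ 1 := by
    rw [div_le_one (by linarith)]; exact hLge1
  have hinv0 : (0 : ℝ) < 1 / (ℓ : ℝ) := by positivity
  -- key power identity
  have hkey : α ^ ℓ * (α ^ ℓ * (ℓ : ℝ) ^ (ℓ - 1)) = α ^ 2 * (α ^ 2 * (ℓ : ℝ)) ^ (ℓ - 1) := by
    obtain ⟨m, hm⟩ : ∃ m, ℓ = m + 1 := ⟨ℓ - 1, by omega⟩
    rw [hm]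
    simp only [Nat.add_sub_cancel]
    rw [mul_pow, ← pow_mul]
    ring
  have h2Mpow : (2 * M) ^ (ℓ - 1) ≤ (α ^ 2 * (ℓ : ℝ)) ^ (ℓ - 1) :=
    pow_le_pow_left₀ (by linarith) h2M _
  -- step 1 : lower bound on LHS
  have hstep1 : -(γ ^ 2 * M ^ (ℓ - 1)) ≤ γ ^ 2 * (1 - γ) ^ (ℓ - 1) := by
    have := mul_le_mul_of_nonneg_left hPlb (sq_nonneg γ)
    linarith
  -- step 2 : upper bound on RHS
  have hAC : α ^ ℓ * C * (1 / (ℓ : ℝ)) ≤ C := by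
    have hprod : α ^ ℓ * (1 / (ℓ : ℝ)) ≤ 1 := by nlinarith
    calc α ^ ℓ * C * (1 / (ℓ : ℝ)) = C * (α ^ ℓ * (1 / (ℓ : ℝ))) := by ring
      _ ≤ C * 1 := mul_le_mul_of_nonneg_left hprod hCpos.le
      _ = C := mul_one C
  have hScS : C * (α ^ 2 * (2 * M) ^ (ℓ - 1)) ≤ α ^ ℓ * C * S := by
    have h1 : α ^ ℓ * C * (α ^ ℓ * (ℓ : ℝ) ^ (ℓ - 1)) ≤ α ^ ℓ * C * S :=
      mul_le_mul_of_nonneg_left hS (by positivity)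
    have h2 : α ^ ℓ * C * (α ^ ℓ * (ℓ : ℝ) ^ (ℓ - 1)) = C * (α ^ 2 * (α ^ 2 * (ℓ : ℝ)) ^ (ℓ - 1)) := by
      linear_combination C * hkey
    have h3 : C * (α ^ 2 * (2 * M) ^ (ℓ - 1)) ≤ C * (α ^ 2 * (α ^ 2 * (ℓ : ℝ)) ^ (ℓ - 1)) := by
      apply mul_le_mul_of_nonneg_left _ hCpos.le
      exact mul_le_mul_of_nonneg_left h2Mpow hα2.le
    linarith
  -- combine
  have hcomb : C * α ^ 2 * (2 : ℝ) ^ (ℓ - 1) * M ^ (ℓ - 1) ≤ C + γ ^ 2 * M ^ (ℓ - 1) := by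
    have h2Mmul : (2 * M) ^ (ℓ - 1) = (2 : ℝ) ^ (ℓ - 1) * M ^ (ℓ - 1) := mul_pow _ _ _
    nlinarith [hstep1, hAC, hScS, heq]
  have hMpow1 : (1 : ℝ) ≤ M ^ (ℓ - 1) := one_le_pow₀ hM1
  have hMpow0 : (0 : ℝ) < M ^ (ℓ - 1) := by positivity
  have hfinal : C * α ^ 2 * (2 : ℝ) ^ (ℓ - 1) ≤ C + γ ^ 2 := by
    have hcomb2 : C * α ^ 2 * (2 : ℝ) ^ (ℓ - 1) * M ^ (ℓ - 1) ≤ (C + γ ^ 2) * M ^ (ℓ - 1) := by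
      nlinarith [sq_nonneg γ]
    have := (mul_le_mul_iff_of_pos_right hMpow0).1 hcomb2
    linarith
  have hmono : C * α ^ 2 * (ℓ : ℝ) ≤ C * α ^ 2 * (2 : ℝ) ^ (ℓ - 1) :=
    mul_le_mul_of_nonneg_left hpow2 (by positivity)
  nlinarith [sq_nonneg γ]

theorem stmt_3 (α : ℝ) (hα0 : 0 < α) (hα1 : α < 1) :
    ¬ ∃ γ : ℝ, 0 < γ ∧ ∀ ℓ : ℕ, 1 ≤ ℓ →
      γ ^ 2 * (1 - γ) ^ (ℓ - 1) =
        (α ^ ℓ * (1 - α) / (1 + α ^ 2)) *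
          (1 / (ℓ : ℝ) +
            ∑' k : ℕ,
              α ^ (k + 1) * (-((k : ℝ) + 1)) ^ (ℓ - 1) * (1 + ((k : ℝ) + 1) * α) ^ 2) := by
  rintro ⟨γ, hγ, h⟩
  set C : ℝ := (1 - α) / (1 + α ^ 2) with hCdef
  have hCpos : 0 < C := div_pos (by linarith) (by positivity)
  set M : ℝ := max 1 |1 - γ| with hMdef
  have hM1 : (1 : ℝ) ≤ M := le_max_left _ _
  have hα2 : (0 : ℝ) < α ^ 2 := by positivity
  -- choose n large
  obtain ⟨n, hn⟩ := exists_nat_gt (max (M / α ^ 2) ((γ ^ 2 + C + 1) / (C * α ^ 2)) + 2)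
  have hmax1 := le_max_left (M / α ^ 2) ((γ ^ 2 + C + 1) / (C * α ^ 2))
  have hmax2 := le_max_right (M / α ^ 2) ((γ ^ 2 + C + 1) / (C * α ^ 2))
  have hMα0 : (0 : ℝ) ≤ M / α ^ 2 := by positivity
  have hn1 : 1 ≤ n := by
    have : (1 : ℝ) ≤ (n : ℝ) := by linarith
    exact_mod_cast this
  obtain ⟨ℓ, hℓeq⟩ : ∃ ℓ : ℕ, ℓ = 2 * n := ⟨2 * n, rfl⟩
  have hℓ1 : 1 ≤ ℓ := by omega
  have hℓR : (ℓ : ℝ) = 2 * (n : ℝ) := by rw [hℓeq]; push_cast; ring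
  have hodd : Odd (ℓ - 1) := ⟨n - 1, by omega⟩
  -- the nonnegative series
  set g : ℕ → ℝ := fun k => α ^ (k + 1) * ((k : ℝ) + 1) ^ (ℓ - 1) * (1 + ((k : ℝ) + 1) * α) ^ 2
    with hgdef
  have hgnn : ∀ k, 0 ≤ g k := fun k => by
    have h0 : (0 : ℝ) ≤ (k : ℝ) := Nat.cast_nonneg k
    positivity
  have hgsum : Summable g := aux_g_summable α hα0 hα1 (ℓ - 1)
  set S : ℝ := ∑' k, g k with hSdef
  have htsum_eq : (∑' k : ℕ,
      α ^ (k + 1) * (-((k : ℝ) + 1)) ^ (ℓ - 1) * (1 + ((k : ℝ) + 1) * α) ^ 2) = -S := by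
    rw [hSdef, ← tsum_neg]
    refine tsum_congr fun k => ?_
    rw [hodd.neg_pow]
    simp only [hgdef]
    ring
  -- lower bound on S via the term k = ℓ - 1
  have hterm : α ^ ℓ * (ℓ : ℝ) ^ (ℓ - 1) ≤ S := by
    refine le_trans ?_ (Summable.le_tsum hgsum (ℓ - 1) fun j _ => hgnn j)
    have hcast : ((ℓ - 1 : ℕ) : ℝ) + 1 = (ℓ : ℝ) := by
      have h' : ((ℓ - 1 : ℕ) : ℝ) = (ℓ : ℝ) - 1 := by
        rw [Nat.cast_sub hℓ1]; norm_num
      rw [h']; ring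
    have hpow : ℓ - 1 + 1 = ℓ := by omega
    simp only [hgdef, hcast, hpow]
    have hLpos : (0 : ℝ) < (ℓ : ℝ) := by
      have : (0 : ℝ) < (n : ℝ) := by exact_mod_cast hn1
      rw [hℓR]; linarith
    have h1 : (1 : ℝ) ≤ (1 + (ℓ : ℝ) * α) ^ 2 := by
      nlinarith [mul_nonneg hLpos.le hα0.le]
    nlinarith [mul_pos (pow_pos hα0 ℓ) (pow_pos hLpos (ℓ - 1))]
  -- rewrite the hypothesis at ℓ
  have heq := h ℓ hℓ1
  rw [htsum_eq] at heq
  have heq' : γ ^ 2 * (1 - γ) ^ (ℓ - 1) = α ^ ℓ * C * (1 / (ℓ : ℝ)) - α ^ ℓ * C * S := by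
    rw [heq, hCdef]; ring
  -- bounds needed by aux_main
  have hPlb : -(M ^ (ℓ - 1)) ≤ (1 - γ) ^ (ℓ - 1) := by
    have h1 : |(1 - γ) ^ (ℓ - 1)| = |1 - γ| ^ (ℓ - 1) := abs_pow _ _
    have h2 : |1 - γ| ^ (ℓ - 1) ≤ M ^ (ℓ - 1) :=
      pow_le_pow_left₀ (abs_nonneg _) (le_max_right _ _) _
    have h3 := neg_abs_le ((1 - γ) ^ (ℓ - 1))
    rw [h1] at h3
    linarith
  have h2M : 2 * M ≤ α ^ 2 * (ℓ : ℝ) := by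
    have hnM : M / α ^ 2 < (n : ℝ) := by linarith
    rw [div_lt_iff₀ hα2] at hnM
    rw [hℓR]; nlinarith
  have hpow2 : (ℓ : ℝ) ≤ 2 ^ (ℓ - 1) := by
    have hN : ℓ ≤ 2 ^ (ℓ - 1) := by
      have := Nat.lt_two_pow_self (n := ℓ - 1)
      omega
    calc (ℓ : ℝ) ≤ ((2 ^ (ℓ - 1) : ℕ) : ℝ) := by exact_mod_cast hN
      _ = (2 : ℝ) ^ (ℓ - 1) := by push_cast; ring
  have hbig : 2 * (γ ^ 2 + C + 1) < C * α ^ 2 * (ℓ : ℝ) := by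
    have hnD : (γ ^ 2 + C + 1) / (C * α ^ 2) < (n : ℝ) := by linarith
    have hCα : (0 : ℝ) < C * α ^ 2 := by positivity
    rw [div_lt_iff₀ hCα] at hnD
    rw [hℓR]; nlinarith
  exact aux_main α γ C M S ℓ hα0 hα1 hCpos hM1 hℓ1 hPlb hterm heq' h2M hpow2 hbig
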